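/- Let n ≥ 1 be an integer, k an index in Fin n, and let μ be the product over Fin n of the uniform probability measure on [−π, π] (i.e., (1/(2π))·Lebesgue restricted to [−π, π] in each coordinate). Define g : (Fin n → ℝ) → ℝ by g(θ) = (1/2)·sin(θ_k)·∏_{j ≠ k} cos²(θ_j/2). Then ∫ g dμ = 0 and ∫ g² dμ = (1/8)·(3/8)^{n−1}; that is, the random variable g has mean zero and variance exactly (1/8)·(3/8)^{n−1} under μ, which decays exponentially in n. -/

import Mathlib

open MeasureTheory Finset

noncomputable def unifMeas : Measure ℝ :=
  (ENNReal.ofReal (1 / (2 * Real.pi))) • (volume.restrict (Set.Icc (-Real.pi) Real.pi))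

lemma unif_integral (f : ℝ → ℝ) :
    ∫ x, f x ∂unifMeas = (1 / (2 * Real.pi)) * ∫ x in (-Real.pi)..Real.pi, f x := by
  have hπ : (0:ℝ) < Real.pi := Real.pi_pos
  rw [unifMeas, integral_smul_measure, ENNReal.toReal_ofReal (by positivity),
    MeasureTheory.integral_Icc_eq_integral_Ioc,
    ← intervalIntegral.integral_of_le (by linarith)]
  simp [smul_eq_mul]

lemma int_sin : ∫ x, (1/2) * Real.sin x ∂unifMeas = 0 := by
  rw [unif_integral, intervalIntegral.integral_const_mul, integral_sin]
  simp

lemma int_sin_sq : ∫ x, ((1/2) * Real.sin x) ^ 2 ∂unifMeas = 1/8 := by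
  have hπ : (0:ℝ) < Real.pi := Real.pi_pos
  have h : ∀ x : ℝ, ((1/2) * Real.sin x) ^ 2 = (1/4) * Real.sin x ^ 2 := by
    intro x; ring
  simp_rw [h]
  rw [unif_integral, intervalIntegral.integral_const_mul, integral_sin_sq]
  simp
  field_simp
  ring

lemma cos_half_sq (x : ℝ) : Real.cos (x/2) ^ 2 = 1/2 + (1/2) * Real.cos x := by
  have h2 : 2 * (x/2) = x := by ring
  rw [Real.cos_sq (x/2), h2]; ring

lemma int_cos4 : ∫ x, (Real.cos (x/2) ^ 2) ^ 2 ∂unifMeas = 3/8 := by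
  have hπ : (0:ℝ) < Real.pi := Real.pi_pos
  have h : ∀ x : ℝ, (Real.cos (x/2) ^ 2) ^ 2
      = 1/4 + (1/2) * Real.cos x + (1/4) * Real.cos x ^ 2 := by
    intro x; rw [cos_half_sq]; ring
  simp_rw [h]
  rw [unif_integral]
  have i1 : IntervalIntegrable (fun _ : ℝ => (1:ℝ)/4) volume (-Real.pi) Real.pi :=
    intervalIntegrable_const
  have i2 : IntervalIntegrable (fun x : ℝ => (1/2) * Real.cos x) volume (-Real.pi) Real.pi :=
    (continuous_const.mul Real.continuous_cos).intervalIntegrable _ _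
  have i3 : IntervalIntegrable (fun x : ℝ => (1/4) * Real.cos x ^ 2) volume (-Real.pi) Real.pi :=
    (continuous_const.mul (Real.continuous_cos.pow 2)).intervalIntegrable _ _
  rw [intervalIntegral.integral_add (i1.add i2) i3, intervalIntegral.integral_add i1 i2,
    intervalIntegral.integral_const_mul, intervalIntegral.integral_const_mul,
    integral_cos, integral_cos_sq]
  simp
  field_simp
  ring

lemma int_cos2 : ∫ x, Real.cos (x/2) ^ 2 ∂unifMeas = 1/2 := by
  have hπ : (0:ℝ) < Real.pi := Real.pi_pos
  simp_rw [cos_half_sq]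
  rw [unif_integral]
  have i1 : IntervalIntegrable (fun _ : ℝ => (1:ℝ)/2) volume (-Real.pi) Real.pi :=
    intervalIntegrable_const
  have i2 : IntervalIntegrable (fun x : ℝ => (1/2) * Real.cos x) volume (-Real.pi) Real.pi :=
    (continuous_const.mul Real.continuous_cos).intervalIntegrable _ _
  rw [intervalIntegral.integral_add i1 i2, intervalIntegral.integral_const_mul, integral_cos]
  simp
  field_simp
  norm_num

instance : IsFiniteMeasure unifMeas := by
  constructor
  rw [unifMeas]
  simp only [Measure.smul_apply, Measure.restrict_apply MeasurableSet.univ, Set.univ_inter,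
    Real.volume_Icc, smul_eq_mul]
  exact ENNReal.mul_lt_top ENNReal.ofReal_lt_top ENNReal.ofReal_lt_top

/-- **Barren-plateau variance of the untilted projector-benchmark gradient.** Under the
product of uniform measures on `[−π, π]` over `Fin n`, the gradient component
`g(θ) = (1/2)·sin(θ k)·∏_{j ≠ k} cos²(θ j / 2)` has mean zero and variance exactly
`(1/8)·(3/8)^(n−1)`, which decays exponentially in `n`. -/
theorem projector_benchmark_gradient_variance (n : ℕ) (hn : 1 ≤ n) (k : Fin n) :
    (∫ θ : Fin n → ℝ,
        ((1 / 2) * Real.sin (θ k) * ∏ j ∈ univ.erase k, Real.cos (θ j / 2) ^ 2)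
        ∂(Measure.pi fun _ : Fin n =>
          (ENNReal.ofReal (1 / (2 * Real.pi))) •
            (volume.restrict (Set.Icc (-Real.pi) Real.pi))) = 0) ∧
    (∫ θ : Fin n → ℝ,
        ((1 / 2) * Real.sin (θ k) * ∏ j ∈ univ.erase k, Real.cos (θ j / 2) ^ 2) ^ 2
        ∂(Measure.pi fun _ : Fin n =>
          (ENNReal.ofReal (1 / (2 * Real.pi))) •
            (volume.restrict (Set.Icc (-Real.pi) Real.pi)))
      = (1 / 8) * (3 / 8) ^ (n - 1)) := by
  rw [show (Measure.pi fun _ : Fin n =>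
      (ENNReal.ofReal (1 / (2 * Real.pi))) •
        (volume.restrict (Set.Icc (-Real.pi) Real.pi))) = Measure.pi fun _ : Fin n => unifMeas
    from rfl]
  letI : MeasureSpace ℝ := ⟨unifMeas⟩
  haveI : SigmaFinite (volume : Measure ℝ) := inferInstanceAs (SigmaFinite unifMeas)
  constructor
  · -- mean
    have key : ∫ θ : Fin n → ℝ,
        ((1 / 2) * Real.sin (θ k) * ∏ j ∈ univ.erase k, Real.cos (θ j / 2) ^ 2)
        ∂(Measure.pi fun _ : Fin n => unifMeas)
        = ∫ θ : Fin n → ℝ, ∏ j,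
            (fun j : Fin n => if j = k then (fun x => (1/2) * Real.sin x)
              else (fun x => Real.cos (x/2) ^ 2)) j (θ j) := by
      congr 1
      funext θ
      rw [← Finset.mul_prod_erase univ _ (mem_univ k)]
      simp only [if_pos rfl]
      congr 1
      exact Finset.prod_congr rfl fun j hj => by
        simp [if_neg (Finset.ne_of_mem_erase hj)]
    rw [key, MeasureTheory.integral_fintype_prod_volume_eq_prod,
      ← Finset.mul_prod_erase univ _ (mem_univ k)]
    simp only [if_pos rfl, if_true]
    rw [show (∫ x, (1/2) * Real.sin x : ℝ) = 0 from int_sin]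
    simp
  · -- second moment
    have key : ∫ θ : Fin n → ℝ,
        ((1 / 2) * Real.sin (θ k) * ∏ j ∈ univ.erase k, Real.cos (θ j / 2) ^ 2) ^ 2
        ∂(Measure.pi fun _ : Fin n => unifMeas)
        = ∫ θ : Fin n → ℝ, ∏ j,
            (fun j : Fin n => if j = k then (fun x => ((1/2) * Real.sin x) ^ 2)
              else (fun x => (Real.cos (x/2) ^ 2) ^ 2)) j (θ j) := by
      congr 1
      funext θ
      rw [← Finset.mul_prod_erase univ _ (mem_univ k)]
      simp only [if_pos rfl]
      rw [mul_pow, ← Finset.prod_pow]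
      congr 1
      exact Finset.prod_congr rfl fun j hj => by
        simp [if_neg (Finset.ne_of_mem_erase hj)]
    rw [key, MeasureTheory.integral_fintype_prod_volume_eq_prod,
      ← Finset.mul_prod_erase univ _ (mem_univ k)]
    simp only [if_pos rfl, if_true]
    have hprod : ∏ j ∈ univ.erase k,
        (∫ x, (if j = k then (fun x => ((1/2) * Real.sin x) ^ 2)
              else (fun x => (Real.cos (x/2) ^ 2) ^ 2)) x)
        = (3/8 : ℝ) ^ (n - 1) := by
      rw [Finset.prod_congr rfl (fun j hj => by
        rw [if_neg (Finset.ne_of_mem_erase hj),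
          show (∫ x, (Real.cos (x/2) ^ 2) ^ 2 : ℝ) = 3/8 from int_cos4]),
        Finset.prod_const, Finset.card_erase_of_mem (mem_univ k), card_univ, Fintype.card_fin]
    rw [hprod, show (∫ x, ((1/2) * Real.sin x) ^ 2 : ℝ) = 1/8 from int_sin_sq]
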